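/- Assume (φ1)–(φ2), let V ∈ C¹(ℝ,ℝ) with V ≥ 0, let α > 0, and let q be a twice differentiable classical solution with continuous derivative of −(φ(|u'|)u')' + V'(u) = 0 on ℝ such that q(t) → α as t → +∞, q(t) → −α as t → −∞, q'(t) > 0 for all t ∈ ℝ, and ∫_ℝ (Φ(q'(t)) + V(q(t))) dt < ∞. Then V(α) = V(−α) = 0 and V(t) > 0 for every t ∈ (−α,α). -/

import Mathlib

open Real Filter Set MeasureTheory

noncomputable def Phi (φ : ℝ → ℝ) (t : ℝ) : ℝ := ∫ s in (0:ℝ)..|t|, s * φ s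

section aux
variable {φ : ℝ → ℝ}

lemma g_strictMono (hφC1 : ContDiffOn ℝ 1 φ (Set.Ioi 0))
    (hφ1 : ∀ t > (0:ℝ), 0 < deriv (fun s => φ s * s) t) :
    StrictMonoOn (fun s => φ s * s) (Set.Ioi 0) :=
  strictMonoOn_of_deriv_pos (convex_Ioi 0)
    (hφC1.continuousOn.mul continuousOn_id)
    (by rw [interior_Ioi]; exact fun x hx => hφ1 x hx)

lemma g_mono (hφC1 : ContDiffOn ℝ 1 φ (Set.Ioi 0))
    (hφpos : ∀ t > (0:ℝ), 0 < φ t)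
    (hφ1 : ∀ t > (0:ℝ), 0 < deriv (fun s => φ s * s) t) :
    MonotoneOn (fun s => φ s * s) (Set.Ici 0) := by
  intro a ha b hb hab
  rcases eq_or_lt_of_le hab with rfl | hlt
  · exact le_rfl
  rcases eq_or_lt_of_le (Set.mem_Ici.1 ha) with rfl | hapos
  · simp only [mul_zero]
    have hbpos : 0 < b := hlt
    exact (mul_pos (hφpos b hbpos) hbpos).le
  · exact (g_strictMono hφC1 hφ1 hapos (hapos.trans hlt) hlt).le

lemma g_intInt (hφC1 : ContDiffOn ℝ 1 φ (Set.Ioi 0))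
    (hφpos : ∀ t > (0:ℝ), 0 < φ t)
    (hφ1 : ∀ t > (0:ℝ), 0 < deriv (fun s => φ s * s) t)
    {a b : ℝ} (ha : 0 ≤ a) (hab : a ≤ b) :
    IntervalIntegrable (fun s => φ s * s) volume a b := by
  have : MonotoneOn (fun s => φ s * s) (Set.uIcc a b) := by
    rw [uIcc_of_le hab]
    exact (g_mono hφC1 hφpos hφ1).mono (fun x hx => ha.trans hx.1)
  exact this.intervalIntegrable

lemma g_int_le (hφC1 : ContDiffOn ℝ 1 φ (Set.Ioi 0))
    (hφpos : ∀ t > (0:ℝ), 0 < φ t)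
    (hφ1 : ∀ t > (0:ℝ), 0 < deriv (fun s => φ s * s) t)
    {a b : ℝ} (ha : 0 ≤ a) (hab : a ≤ b) :
    (b - a) * (φ a * a) ≤ (∫ s in a..b, φ s * s) ∧
      (∫ s in a..b, φ s * s) ≤ (b - a) * (φ b * b) := by
  have hint := g_intInt hφC1 hφpos hφ1 ha hab
  have hm := g_mono hφC1 hφpos hφ1
  constructor
  · have := intervalIntegral.integral_mono_on hab intervalIntegrable_const hint
      (fun s hs => hm (Set.mem_Ici.2 ha) (Set.mem_Ici.2 (ha.trans hs.1)) hs.1)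
    rw [intervalIntegral.integral_const, smul_eq_mul] at this
    exact this
  · have := intervalIntegral.integral_mono_on hab hint intervalIntegrable_const
      (fun s hs => hm (Set.mem_Ici.2 (ha.trans hs.1)) (Set.mem_Ici.2 (ha.trans hab)) hs.2)
    rw [intervalIntegral.integral_const, smul_eq_mul] at this
    exact this

lemma Phi_eq (hy : 0 ≤ y) : Phi φ y = ∫ s in (0:ℝ)..y, φ s * s := by
  rw [Phi, abs_of_nonneg hy]
  simp only [mul_comm]

lemma Phi_nonneg (hφpos : ∀ t > (0:ℝ), 0 < φ t) (y : ℝ) : 0 ≤ Phi φ y := by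
  rw [Phi]
  apply intervalIntegral.integral_nonneg (abs_nonneg y)
  intro s hs
  rcases eq_or_lt_of_le hs.1 with rfl | hspos
  · simp
  · exact (mul_pos hspos (hφpos s hspos)).le

lemma Phi_mono (hφC1 : ContDiffOn ℝ 1 φ (Set.Ioi 0))
    (hφpos : ∀ t > (0:ℝ), 0 < φ t)
    (hφ1 : ∀ t > (0:ℝ), 0 < deriv (fun s => φ s * s) t)
    {a b : ℝ} (ha : 0 ≤ a) (hab : a ≤ b) : Phi φ a ≤ Phi φ b := by
  rw [Phi_eq ha, Phi_eq (ha.trans hab)]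
  rw [← intervalIntegral.integral_add_adjacent_intervals
    (g_intInt hφC1 hφpos hφ1 le_rfl ha) (g_intInt hφC1 hφpos hφ1 ha hab)]
  have h1 := (g_int_le hφC1 hφpos hφ1 ha hab).1
  have hnn : 0 ≤ φ a * a := by
    rcases eq_or_lt_of_le ha with rfl | h
    · simp
    · exact (mul_pos (hφpos a h) h).le
  nlinarith [mul_nonneg (sub_nonneg.2 hab) hnn]

lemma Phi_pos (hφC1 : ContDiffOn ℝ 1 φ (Set.Ioi 0))
    (hφpos : ∀ t > (0:ℝ), 0 < φ t)
    (hφ1 : ∀ t > (0:ℝ), 0 < deriv (fun s => φ s * s) t)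
    {y : ℝ} (hy : 0 < y) : 0 < Phi φ y := by
  have h2 : (0:ℝ) ≤ y/2 := by linarith
  have h3 : y/2 ≤ y := by linarith
  rw [Phi_eq hy.le, ← intervalIntegral.integral_add_adjacent_intervals
    (g_intInt hφC1 hφpos hφ1 le_rfl h2) (g_intInt hφC1 hφpos hφ1 h2 h3)]
  have hA : (0:ℝ) ≤ ∫ s in (0:ℝ)..(y/2), φ s * s := by
    have := (g_int_le hφC1 hφpos hφ1 le_rfl h2).1
    simpa using this
  have hB := (g_int_le hφC1 hφpos hφ1 h2 h3).1
  have hg : 0 < φ (y/2) * (y/2) := mul_pos (hφpos _ (by linarith)) (by linarith)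
  nlinarith

lemma Phi_lt (hφC1 : ContDiffOn ℝ 1 φ (Set.Ioi 0))
    (hφpos : ∀ t > (0:ℝ), 0 < φ t)
    (hφ1 : ∀ t > (0:ℝ), 0 < deriv (fun s => φ s * s) t)
    {y : ℝ} (hy : 0 < y) : Phi φ y < φ y * y * y := by
  have h2 : (0:ℝ) ≤ y/2 := by linarith
  have h3 : y/2 ≤ y := by linarith
  rw [Phi_eq hy.le, ← intervalIntegral.integral_add_adjacent_intervals
    (g_intInt hφC1 hφpos hφ1 le_rfl h2) (g_intInt hφC1 hφpos hφ1 h2 h3)]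
  have hA := (g_int_le hφC1 hφpos hφ1 le_rfl h2).2
  have hB := (g_int_le hφC1 hφpos hφ1 h2 h3).2
  have hstrict : φ (y/2) * (y/2) < φ y * y :=
    g_strictMono hφC1 hφ1 (by linarith : (0:ℝ) < y/2) hy (by linarith)
  nlinarith

end aux

def IsClassicalSolution (φ V q : ℝ → ℝ) : Prop :=
  Differentiable ℝ q ∧
  ∀ t : ℝ, HasDerivAt
    (fun s => if deriv q s = 0 then 0 else φ |deriv q s| * deriv q s)
    (deriv V (q t)) t

def IsHeteroclinic (φ V : ℝ → ℝ) (α : ℝ) (q : ℝ → ℝ) : Prop :=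
  IsClassicalSolution φ V q ∧ Differentiable ℝ (deriv q) ∧ Continuous (deriv q) ∧
  q 0 = 0 ∧ Tendsto q atTop (nhds α) ∧ Tendsto q atBot (nhds (-α))

theorem statement18 (φ V : ℝ → ℝ) (l m α : ℝ)
    (hφC1 : ContDiffOn ℝ 1 φ (Set.Ioi 0))
    (hφpos : ∀ t > (0:ℝ), 0 < φ t)
    (hφ1 : ∀ t > (0:ℝ), 0 < deriv (fun s => φ s * s) t)
    (hl : 1 < l) (hlm : l ≤ m)
    (hφ2 : ∀ t > (0:ℝ), l - 1 ≤ deriv (fun s => φ s * s) t / φ t ∧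
      deriv (fun s => φ s * s) t / φ t ≤ m - 1)
    (hV1 : ContDiff ℝ 1 V) (hVnn : ∀ t, 0 ≤ V t)
    (hα : 0 < α)
    (q : ℝ → ℝ) (hq : IsClassicalSolution φ V q)
    (hq' : Differentiable ℝ (deriv q)) (hqc : Continuous (deriv q))
    (hqtop : Tendsto q atTop (nhds α)) (hqbot : Tendsto q atBot (nhds (-α)))
    (hqpos : ∀ t : ℝ, 0 < deriv q t)
    (hfin : (∫⁻ t : ℝ, ENNReal.ofReal (Phi φ (deriv q t) + V (q t))) < ⊤) :
    V α = 0 ∧ V (-α) = 0 ∧ ∀ t, -α < t → t < α → 0 < V t := by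
  set f : ℝ → ℝ := fun t => Phi φ (deriv q t) + V (q t) with hf
  have hfnn : ∀ t, 0 ≤ f t := fun t => add_nonneg (Phi_nonneg hφpos _) (hVnn _)
  -- key: the integrand gets arbitrarily small far to the right and to the left
  have hdiv : ∀ ε > (0:ℝ), ∀ S : Set ℝ, MeasurableSet S → volume S = ⊤ →
      (∀ t ∈ S, ε ≤ f t) → False := by
    intro ε hε S hSm hSv hS
    refine absurd hfin (not_lt.2 ?_)
    calc (⊤ : ENNReal) = ENNReal.ofReal ε * volume S := by
          rw [hSv, ENNReal.mul_top (by simpa [ENNReal.ofReal_eq_zero, not_le] using hε)]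
      _ = ∫⁻ _ in S, ENNReal.ofReal ε := (setLIntegral_const _ _).symm
      _ = ∫⁻ t, S.indicator (fun _ => ENNReal.ofReal ε) t := (lintegral_indicator hSm _).symm
      _ ≤ ∫⁻ t, ENNReal.ofReal (f t) := by
          apply lintegral_mono
          intro t
          by_cases ht : t ∈ S
          · simpa [ht] using ENNReal.ofReal_le_ofReal (hS t ht)
          · simp [ht]
  have hkeytop : ∀ ε > (0:ℝ), ∀ T : ℝ, ∃ t ≥ T, f t < ε := by
    intro ε hε T
    by_contra h
    push_neg at h
    exact hdiv ε hε (Set.Ici T) measurableSet_Ici Real.volume_Ici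
      (fun t ht => h t ht)
  have hkeybot : ∀ ε > (0:ℝ), ∀ T : ℝ, ∃ t ≤ T, f t < ε := by
    intro ε hε T
    by_contra h
    push_neg at h
    exact hdiv ε hε (Set.Iic T) measurableSet_Iic Real.volume_Iic
      (fun t ht => h t ht)
  -- sequence to +∞ along which f → 0
  choose u hu1 hu2 using fun n : ℕ => hkeytop (1/(n+1)) (by positivity) n
  have hut : Tendsto u atTop atTop :=
    tendsto_atTop_mono hu1 tendsto_natCast_atTop_atTop
  have hfu : Tendsto (fun n => f (u n)) atTop (nhds 0) :=
    squeeze_zero (fun n => hfnn _) (fun n => (hu2 n).le)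
      tendsto_one_div_add_atTop_nhds_zero_nat
  have hVu : Tendsto (fun n => V (q (u n))) atTop (nhds 0) :=
    squeeze_zero (fun n => hVnn _)
      (fun n => le_add_of_nonneg_left (Phi_nonneg hφpos _)) hfu
  have hPhiu : Tendsto (fun n => Phi φ (deriv q (u n))) atTop (nhds 0) :=
    squeeze_zero (fun n => Phi_nonneg hφpos _)
      (fun n => le_add_of_nonneg_right (hVnn _)) hfu
  have hVα : V α = 0 :=
    tendsto_nhds_unique (((hV1.continuous.tendsto α).comp (hqtop.comp hut))) hVu
  -- sequence to -∞
  choose v hv1 hv2 using fun n : ℕ => hkeybot (1/(n+1)) (by positivity) (-n)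
  have hvt : Tendsto v atTop atBot :=
    tendsto_atBot_mono hv1
      (tendsto_neg_atBot_iff.2 tendsto_natCast_atTop_atTop)
  have hfv : Tendsto (fun n => f (v n)) atTop (nhds 0) :=
    squeeze_zero (fun n => hfnn _) (fun n => (hv2 n).le)
      tendsto_one_div_add_atTop_nhds_zero_nat
  have hVv : Tendsto (fun n => V (q (v n))) atTop (nhds 0) :=
    squeeze_zero (fun n => hVnn _)
      (fun n => le_add_of_nonneg_left (Phi_nonneg hφpos _)) hfv
  have hVmα : V (-α) = 0 :=
    tendsto_nhds_unique (((hV1.continuous.tendsto (-α)).comp (hqbot.comp hvt))) hVv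
  -- deriv q (u n) → 0
  have hxu : Tendsto (fun n => deriv q (u n)) atTop (nhds 0) := by
    rw [tendsto_order]
    constructor
    · intro a ha
      exact Eventually.of_forall fun n => ha.trans (hqpos _)
    · intro b hb
      have hPb : 0 < Phi φ b := Phi_pos hφC1 hφpos hφ1 hb
      filter_upwards [hPhiu.eventually_lt_const hPb] with n hn
      by_contra h
      push_neg at h
      exact absurd (Phi_mono hφC1 hφpos hφ1 hb.le h) (not_le.2 hn)
  have hgxu : Tendsto (fun n => φ (deriv q (u n)) * deriv q (u n) * deriv q (u n))
      atTop (nhds 0) := by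
    apply squeeze_zero'
    · exact Eventually.of_forall fun n =>
        mul_nonneg (mul_nonneg (hφpos _ (hqpos _)).le (hqpos _).le) (hqpos _).le
    · filter_upwards [hxu.eventually_lt_const one_pos] with n hn
      have : φ (deriv q (u n)) * deriv q (u n) ≤ φ 1 * 1 :=
        g_mono hφC1 hφpos hφ1 (Set.mem_Ici.2 (hqpos _).le) (Set.mem_Ici.2 zero_le_one) hn.le
      exact mul_le_mul_of_nonneg_right this (hqpos _).le
    · have : Tendsto (fun n => (φ 1 * 1) * deriv q (u n)) atTop (nhds ((φ 1 * 1) * 0)) :=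
        tendsto_const_nhds.mul hxu
      simpa using this
  -- energy conservation
  obtain ⟨hqd, hode⟩ := hq
  have heq : (fun s => if deriv q s = 0 then 0 else φ |deriv q s| * deriv q s)
      = fun s => φ (deriv q s) * deriv q s := by
    funext s
    rw [if_neg (hqpos s).ne', abs_of_pos (hqpos s)]
  rw [heq] at hode
  set E : ℝ → ℝ := fun t =>
    φ (deriv q t) * deriv q t * deriv q t - Phi φ (deriv q t) - V (q t) with hE
  have hEderiv : ∀ t, HasDerivAt E 0 t := by
    intro t
    have hx := hqpos t
    have h2 : HasDerivAt (deriv q) (deriv (deriv q) t) t := (hq' t).hasDerivAt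
    have h3 := (hode t).mul h2
    have hcont : ContinuousOn (fun s : ℝ => s * φ s) (Set.Ioi 0) :=
      continuousOn_id.mul hφC1.continuousOn
    have hint : IntervalIntegrable (fun s : ℝ => s * φ s) volume 0 (deriv q t) := by
      have := g_intInt hφC1 hφpos hφ1 le_rfl hx.le
      have he : (fun s : ℝ => s * φ s) = fun s => φ s * s := funext fun s => mul_comm _ _
      rw [he]
      exact this
    have hG : HasDerivAt (fun x => ∫ s in (0:ℝ)..x, s * φ s)
        (deriv q t * φ (deriv q t)) (deriv q t) :=
      intervalIntegral.integral_hasDerivAt_right hint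
        (hcont.stronglyMeasurableAtFilter isOpen_Ioi _ hx)
        (hcont.continuousAt (isOpen_Ioi.mem_nhds hx))
    have h4 : HasDerivAt (fun s => Phi φ (deriv q s))
        (deriv q t * φ (deriv q t) * deriv (deriv q) t) t := by
      have hcomp : (fun s => Phi φ (deriv q s))
          = (fun x => ∫ s in (0:ℝ)..x, s * φ s) ∘ deriv q := by
        funext s
        simp only [Function.comp, Phi, abs_of_pos (hqpos s)]
      rw [hcomp]
      exact hG.comp t h2
    have hVd : HasDerivAt V (deriv V (q t)) (q t) :=
      ((hV1.differentiable one_ne_zero) (q t)).hasDerivAt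
    have h5 := hVd.comp t (hqd t).hasDerivAt
    have h6 := (h3.sub h4).sub h5
    exact h6.congr_deriv (by ring)
  have hEconst : ∀ s t, E s = E t := fun s t =>
    is_const_of_deriv_eq_zero (fun r => (hEderiv r).differentiableAt)
      (fun r => (hEderiv r).deriv) s t
  have hE0 : ∀ t, E t = 0 := by
    have h1 : Tendsto (fun n => E (u n)) atTop (nhds (E 0)) := by
      have : (fun n => E (u n)) = fun _ => E 0 := funext fun n => hEconst (u n) 0
      rw [this]
      exact tendsto_const_nhds
    have h2 : Tendsto (fun n => E (u n)) atTop (nhds 0) := by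
      have := (hgxu.sub hPhiu).sub hVu
      simpa using this
    intro t
    rw [hEconst t 0]
    exact tendsto_nhds_unique h1 h2
  refine ⟨hVα, hVmα, ?_⟩
  intro c hc1 hc2
  by_contra h
  have hc0 : V c = 0 := le_antisymm (not_lt.1 h) (hVnn c)
  obtain ⟨a, ha⟩ := (hqbot.eventually_lt_const hc1).exists
  obtain ⟨b, hb⟩ := (hqtop.eventually_const_lt hc2).exists
  obtain ⟨t0, ht0⟩ := intermediate_value_univ a b hqd.continuous ⟨ha.le, hb.le⟩
  have hlt := Phi_lt hφC1 hφpos hφ1 (hqpos t0)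
  have hEt0 : φ (deriv q t0) * deriv q t0 * deriv q t0
      - Phi φ (deriv q t0) - V (q t0) = 0 := hE0 t0
  rw [ht0, hc0] at hEt0
  linarith
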